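/- Let triangles ABC and A'B'C' be directly similar, related by a nontrivial spiral similarity centered at J (not a pure translation or identity). Then the lines AA', BB', CC' are concurrent if and only if the point of concurrency lies on the circumcircle of ABC (equivalently, the second intersection point of circumcircles of ABC and A'B'C' other than the similarity-related fixed data is the perspector). -/

import Mathlib

open Complex

lemma collinear_param {a b c : ℂ} (h : Collinear ℝ ({a, b, c} : Set ℂ)) (hab : a ≠ b) :
    ∃ t : ℝ, c - a = t • (b - a) := by
  rw [collinear_iff_of_mem (Set.mem_insert a _)] at h
  obtain ⟨v, hv⟩ := h
  obtain ⟨rb, hb⟩ := hv b (by simp)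
  obtain ⟨rc, hc⟩ := hv c (by simp)
  have hb' : b - a = rb • v := by rw [hb]; simp [vadd_eq_add]
  have hc' : c - a = rc • v := by rw [hc]; simp [vadd_eq_add]
  have hrb : rb ≠ 0 := by
    rintro rfl
    simp at hb'
    exact hab (by linear_combination -hb')
  refine ⟨rc / rb, ?_⟩
  rw [hb', hc', smul_smul, div_mul_cancel₀ _ hrb]

lemma delta_ne {a b c : ℂ} (h : ¬ Collinear ℝ ({a, b, c} : Set ℂ)) :
    (b - a).re * (c - a).im - (b - a).im * (c - a).re ≠ 0 := by
  intro hδ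
  apply h
  by_cases hba : b - a = 0
  · have : b = a := by linear_combination hba
    subst this
    simp [Set.insert_comm, collinear_pair]
  · rw [collinear_iff_of_mem (Set.mem_insert a _)]
    refine ⟨b - a, fun p hp => ?_⟩
    have hns : Complex.normSq (b - a) ≠ 0 := by simpa using hba
    simp only [Set.mem_insert_iff, Set.mem_singleton_iff] at hp
    rcases hp with rfl | rfl | rfl
    · exact ⟨0, by simp⟩
    · exact ⟨1, by simp [vadd_eq_add]⟩
    · refine ⟨((b-a).re * (p-a).re + (b-a).im * (p-a).im) / Complex.normSq (b - a), ?_⟩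
      have hns' : (b-a).re * (b-a).re + (b-a).im * (b-a).im ≠ 0 := by
        simpa [Complex.normSq_apply] using hns
      have key1 : ((b-a).re * (p-a).re + (b-a).im * (p-a).im) * (b-a).re
          = (p-a).re * ((b-a).re * (b-a).re + (b-a).im * (b-a).im) := by
        linear_combination (b-a).im * hδ
      have key2 : ((b-a).re * (p-a).re + (b-a).im * (p-a).im) * (b-a).im
          = (p-a).im * ((b-a).re * (b-a).re + (b-a).im * (b-a).im) := by
        linear_combination (-(b-a).re) * hδ
      apply Complex.ext
      · simp only [vadd_eq_add, Complex.add_re, Complex.real_smul, Complex.mul_re,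
          Complex.ofReal_re, Complex.ofReal_im, Complex.normSq_apply, zero_mul, sub_zero]
        rw [div_mul_eq_mul_div, key1, mul_div_assoc, div_self hns', mul_one, Complex.sub_re]
        ring
      · simp only [vadd_eq_add, Complex.add_im, Complex.real_smul, Complex.mul_im,
          Complex.ofReal_re, Complex.ofReal_im, Complex.normSq_apply, zero_mul, add_zero]
        rw [div_mul_eq_mul_div, key2, mul_div_assoc, div_self hns', mul_one, Complex.sub_im]
        ring


lemma circle_key {A B C Z J O : ℂ} {r : ℝ} {u : ℂ} (hu : u.im ≠ 0)
    (hδ : (B - A).re * (C - A).im - (B - A).im * (C - A).re ≠ 0)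
    (hA : (u * (Z - A) * (starRingEnd ℂ) (A - J)).im = 0)
    (hB : (u * (Z - B) * (starRingEnd ℂ) (B - J)).im = 0)
    (hC : (u * (Z - C) * (starRingEnd ℂ) (C - J)).im = 0)
    (hrA : Complex.normSq (A - O) = r ^ 2)
    (hrB : Complex.normSq (B - O) = r ^ 2)
    (hrC : Complex.normSq (C - O) = r ^ 2) :
    Complex.normSq (Z - O) = r ^ 2 := by
  simp only [Complex.mul_im, Complex.mul_re, Complex.sub_re, Complex.sub_im,
    Complex.conj_re, Complex.conj_im, Complex.normSq_apply, neg_sub] at hA hB hC hrA hrB hrC hδ ⊢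
  set α := -2*u.im*O.re + (u.re*Z.im + u.im*Z.re) + (-(u.re*J.im) + u.im*J.re) with hαdef
  set β := -2*u.im*O.im - (u.re*Z.re - u.im*Z.im) + (u.re*J.re + u.im*J.im) with hβdef
  have eB : α*(B.re-A.re) + β*(B.im-A.im) = 0 := by
    rw [hαdef, hβdef]; linear_combination (hB + u.im*hrB) - (hA + u.im*hrA)
  have eC : α*(C.re-A.re) + β*(C.im-A.im) = 0 := by
    rw [hαdef, hβdef]; linear_combination (hC + u.im*hrC) - (hA + u.im*hrA)
  have hαβ : α * ((B.re-A.re)*(C.im-A.im) - (B.im-A.im)*(C.re-A.re)) = 0 := by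
    linear_combination (C.im-A.im)*eB - (B.im-A.im)*eC
  have hβα : β * ((B.re-A.re)*(C.im-A.im) - (B.im-A.im)*(C.re-A.re)) = 0 := by
    linear_combination (B.re-A.re)*eC - (C.re-A.re)*eB
  have hα : α = 0 := by
    rcases mul_eq_zero.mp hαβ with h | h
    · exact h
    · exact absurd h hδ
  have hβ : β = 0 := by
    rcases mul_eq_zero.mp hβα with h | h
    · exact h
    · exact absurd h hδ
  have final : u.im * ((Z.re - O.re) * (Z.re - O.re) + (Z.im - O.im) * (Z.im - O.im) - r ^ 2) = 0 := by
    rw [hαdef] at hα; rw [hβdef] at hβ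
    linear_combination (hA + u.im*hrA) + (Z.re - A.re)*hα + (Z.im - A.im)*hβ
  have := mul_eq_zero.mp final
  rcases this with h | h
  · exact absurd h hu
  · linarith



/-- Let triangles `ABC` and `A'B'C'` be related by a nontrivial spiral similarity centred
at `J` with non-real ratio `w`.  Then the lines `AA', BB', CC'` are concurrent if and
only if they are concurrent at a point lying on both circumcircles (the second
intersection point of the circumcircles of `ABC` and `A'B'C'`). -/
theorem stmt_12 (J A B C A' B' C' O₁ O₂ : ℂ) (r₁ r₂ : ℝ) (w : ℂ)
    (hw0 : w ≠ 0) (hw1 : w ≠ 1) (hwim : w.im ≠ 0)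
    (hncol : ¬ Collinear ℝ ({A, B, C} : Set ℂ))
    (hAJ : A ≠ J) (hBJ : B ≠ J) (hCJ : C ≠ J)
    (hA' : A' = J + w * (A - J)) (hB' : B' = J + w * (B - J)) (hC' : C' = J + w * (C - J))
    (hO₁ : dist O₁ A = r₁ ∧ dist O₁ B = r₁ ∧ dist O₁ C = r₁)
    (hO₂ : dist O₂ A' = r₂ ∧ dist O₂ B' = r₂ ∧ dist O₂ C' = r₂) :
    (∃ Z : ℂ, Collinear ℝ ({A, A', Z} : Set ℂ) ∧ Collinear ℝ ({B, B', Z} : Set ℂ) ∧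
        Collinear ℝ ({C, C', Z} : Set ℂ)) ↔
    (∃ Z : ℂ, Collinear ℝ ({A, A', Z} : Set ℂ) ∧ Collinear ℝ ({B, B', Z} : Set ℂ) ∧
        Collinear ℝ ({C, C', Z} : Set ℂ) ∧ dist O₁ Z = r₁ ∧ dist O₂ Z = r₂) := by
  obtain ⟨hO1A, hO1B, hO1C⟩ := hO₁
  obtain ⟨hO2A, hO2B, hO2C⟩ := hO₂
  constructor
  · rintro ⟨Z, h1, h2, h3⟩
    have hw1' : w - 1 ≠ 0 := sub_ne_zero.mpr hw1
    have hAJ' : A - J ≠ 0 := sub_ne_zero.mpr hAJ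
    have hBJ' : B - J ≠ 0 := sub_ne_zero.mpr hBJ
    have hCJ' : C - J ≠ 0 := sub_ne_zero.mpr hCJ
    have hA'A : A' - A = (w - 1) * (A - J) := by rw [hA']; ring
    have hB'B : B' - B = (w - 1) * (B - J) := by rw [hB']; ring
    have hC'C : C' - C = (w - 1) * (C - J) := by rw [hC']; ring
    have hAA' : A ≠ A' := by
      intro h
      exact mul_ne_zero hw1' hAJ' (by rw [← hA'A, ← h]; ring)
    have hBB' : B ≠ B' := by
      intro h
      exact mul_ne_zero hw1' hBJ' (by rw [← hB'B, ← h]; ring)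
    have hCC' : C ≠ C' := by
      intro h
      exact mul_ne_zero hw1' hCJ' (by rw [← hC'C, ← h]; ring)
    obtain ⟨tA, htA⟩ := collinear_param h1 hAA'
    obtain ⟨tB, htB⟩ := collinear_param h2 hBB'
    obtain ⟨tC, htC⟩ := collinear_param h3 hCC'
    rw [hA'A] at htA
    rw [hB'B] at htB
    rw [hC'C] at htC
    -- imaginary-part conditions for the first circle
    have imcond : ∀ (P : ℂ) (t : ℝ), Z - P = t • ((w-1)*(P-J)) →
        ((starRingEnd ℂ) (w-1) * (Z - P) * (starRingEnd ℂ) (P - J)).im = 0 := by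
      intro P t ht
      rw [ht, Complex.real_smul]
      have : (starRingEnd ℂ) (w-1) * ((t:ℂ) * ((w-1)*(P-J))) * (starRingEnd ℂ) (P - J)
          = (t:ℂ) * (((w-1) * (starRingEnd ℂ) (w-1)) * ((P-J) * (starRingEnd ℂ) (P-J))) := by
        ring
      rw [this, Complex.mul_conj, Complex.mul_conj]
      simp [← Complex.ofReal_mul]
    have hu1 : ((starRingEnd ℂ) (w-1)).im ≠ 0 := by
      simpa using hwim
    have hδ1 := delta_ne hncol
    have ns : ∀ (P : ℂ) (hd : dist O₁ P = r₁), Complex.normSq (P - O₁) = r₁ ^ 2 := by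
      intro P hd
      rw [← Complex.sq_norm, ← Complex.dist_eq, dist_comm, hd]
    have nsZ1 : Complex.normSq (Z - O₁) = r₁ ^ 2 :=
      circle_key hu1 hδ1 (imcond A tA htA) (imcond B tB htB) (imcond C tC htC)
        (ns A hO1A) (ns B hO1B) (ns C hO1C)
    have hr1 : dist O₁ Z = r₁ := by
      have h0 : 0 ≤ r₁ := hO1A ▸ dist_nonneg
      rw [dist_comm, Complex.dist_eq]
      rw [← Complex.sq_norm] at nsZ1
      nlinarith [norm_nonneg (Z - O₁)]
    -- second circle
    have h1' : Collinear ℝ ({A', A, Z} : Set ℂ) := by rwa [Set.insert_comm] at h1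
    have h2' : Collinear ℝ ({B', B, Z} : Set ℂ) := by rwa [Set.insert_comm] at h2
    have h3' : Collinear ℝ ({C', C, Z} : Set ℂ) := by rwa [Set.insert_comm] at h3
    obtain ⟨sA, hsA⟩ := collinear_param h1' hAA'.symm
    obtain ⟨sB, hsB⟩ := collinear_param h2' hBB'.symm
    obtain ⟨sC, hsC⟩ := collinear_param h3' hCC'.symm
    have hu2 : ((1 - (starRingEnd ℂ) w) * w).im ≠ 0 := by
      have : ((1 - (starRingEnd ℂ) w) * w).im = w.im := by
        simp [Complex.mul_im, Complex.sub_re, Complex.sub_im, Complex.conj_re, Complex.conj_im]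
        ring
      rw [this]; exact hwim
    have hnw : w.re * w.re + w.im * w.im ≠ 0 := by
      have : Complex.normSq w ≠ 0 := by
        simpa using (Complex.normSq_pos.mpr hw0).ne'
      simpa [Complex.normSq_apply] using this
    have hδ2 : (B' - A').re * (C' - A').im - (B' - A').im * (C' - A').re ≠ 0 := by
      have hBA' : B' - A' = w * (B - A) := by rw [hA', hB']; ring
      have hCA' : C' - A' = w * (C - A) := by rw [hA', hC']; ring
      rw [hBA', hCA']
      have : (w*(B-A)).re*(w*(C-A)).im - (w*(B-A)).im*(w*(C-A)).re
          = (w.re * w.re + w.im * w.im) * ((B-A).re*(C-A).im - (B-A).im*(C-A).re) := by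
        simp [Complex.mul_re, Complex.mul_im]; ring
      rw [this]
      exact mul_ne_zero hnw hδ1
    have imcond2 : ∀ (P P' : ℂ) (s : ℝ), P' = J + w * (P - J) → Z - P' = s • (P - P') →
        ((1 - (starRingEnd ℂ) w) * w * (Z - P') * (starRingEnd ℂ) (P' - J)).im = 0 := by
      intro P P' s hP' hs
      have hPP' : P - P' = (1 - w) * (P - J) := by rw [hP']; ring
      have hP'J : P' - J = w * (P - J) := by rw [hP']; ring
      rw [hs, hPP', hP'J, Complex.real_smul, map_mul]
      have : (1 - (starRingEnd ℂ) w) * w * ((s:ℂ) * ((1 - w) * (P - J)))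
            * ((starRingEnd ℂ) w * (starRingEnd ℂ) (P - J))
          = (s:ℂ) * (((1-w) * (starRingEnd ℂ) (1-w)) * ((w * (starRingEnd ℂ) w)
            * ((P-J) * (starRingEnd ℂ) (P-J)))) := by
        have hc : (starRingEnd ℂ) (1 - w) = 1 - (starRingEnd ℂ) w := by
          rw [map_sub, map_one]
        rw [hc]; ring
      rw [this, Complex.mul_conj, Complex.mul_conj, Complex.mul_conj]
      simp [← Complex.ofReal_mul]
    have ns2 : ∀ (P : ℂ) (hd : dist O₂ P = r₂), Complex.normSq (P - O₂) = r₂ ^ 2 := by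
      intro P hd
      rw [← Complex.sq_norm, ← Complex.dist_eq, dist_comm, hd]
    have nsZ2 : Complex.normSq (Z - O₂) = r₂ ^ 2 :=
      circle_key hu2 hδ2 (imcond2 A A' sA hA' hsA) (imcond2 B B' sB hB' hsB)
        (imcond2 C C' sC hC' hsC) (ns2 A' hO2A) (ns2 B' hO2B) (ns2 C' hO2C)
    have hr2 : dist O₂ Z = r₂ := by
      have h0 : 0 ≤ r₂ := hO2A ▸ dist_nonneg
      rw [dist_comm, Complex.dist_eq]
      rw [← Complex.sq_norm] at nsZ2
      nlinarith [norm_nonneg (Z - O₂)]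
    exact ⟨Z, h1, h2, h3, hr1, hr2⟩
  · rintro ⟨Z, h1, h2, h3, _, _⟩
    exact ⟨Z, h1, h2, h3⟩
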